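/- The word problem of the algebra ℤ[1/2] ⋊ ℤ with swapping is decidable: letting Term be the inductive type of formal expressions built from the two constants A and T, a binary operation Mul, and unary operations Inv and Swap, with the partial evaluation eval : Term → Option (ℤ[1/2] × ℤ) defined by eval(A) = (1,0), eval(T) = (0,1), eval(Mul s t) = eval(s)·eval(t), eval(Inv s) = eval(s)⁻¹ (both in ℤ[1/2] ⋊ ℤ, and undefined if a subterm is undefined), and eval(Swap s) = (m, r) if eval(s) = (r, m) with r ∈ ℤ, undefined otherwise — there exists a computable function g : Term → Bool such that g(s) = true if and only if eval(s) is defined and equals the identity (0,0). -/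

import Mathlib

/-- A rational number is *dyadic* (an element of ℤ[1/2]) if it has the form `u·2^x`
with `u, x ∈ ℤ`. -/
def IsDyadic (q : ℚ) : Prop := ∃ u x : ℤ, q = (u : ℚ) * 2 ^ x

theorem isDyadic_int (z : ℤ) : IsDyadic (z : ℚ) := ⟨z, 0, by norm_num⟩

theorem isDyadic_zero : IsDyadic (0 : ℚ) := ⟨0, 0, by norm_num⟩

theorem isDyadic_one : IsDyadic (1 : ℚ) := ⟨1, 0, by norm_num⟩

theorem IsDyadic.add {a b : ℚ} (ha : IsDyadic a) (hb : IsDyadic b) : IsDyadic (a + b) := by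
  obtain ⟨u, x, rfl⟩ := ha
  obtain ⟨v, y, rfl⟩ := hb
  rcases le_total x y with h | h
  · refine ⟨u + v * 2 ^ (y - x).toNat, x, ?_⟩
    have h2 : (((y - x).toNat : ℤ)) = y - x := Int.toNat_of_nonneg (by omega)
    have h3 : (2 : ℚ) ^ ((y - x).toNat) = (2 : ℚ) ^ (y - x : ℤ) := by
      rw [← zpow_natCast (2 : ℚ) (y - x).toNat, h2]
    have h4 : y - x + x = y := by omega
    push_cast
    rw [h3, add_mul, mul_assoc, ← zpow_add₀ (by norm_num : (2:ℚ) ≠ 0), h4]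
  · refine ⟨u * 2 ^ (x - y).toNat + v, y, ?_⟩
    have h2 : (((x - y).toNat : ℤ)) = x - y := Int.toNat_of_nonneg (by omega)
    have h3 : (2 : ℚ) ^ ((x - y).toNat) = (2 : ℚ) ^ (x - y : ℤ) := by
      rw [← zpow_natCast (2 : ℚ) (x - y).toNat, h2]
    have h4 : x - y + y = x := by omega
    push_cast
    rw [h3, add_mul, mul_assoc, ← zpow_add₀ (by norm_num : (2:ℚ) ≠ 0), h4]

theorem IsDyadic.neg {a : ℚ} (ha : IsDyadic a) : IsDyadic (-a) := by
  obtain ⟨u, x, rfl⟩ := ha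
  exact ⟨-u, x, by push_cast; ring⟩

theorem IsDyadic.zpow_mul (x : ℤ) {a : ℚ} (ha : IsDyadic a) : IsDyadic (2 ^ x * a) := by
  obtain ⟨u, y, rfl⟩ := ha
  exact ⟨u, x + y, by rw [zpow_add₀ (by norm_num : (2:ℚ) ≠ 0)]; ring⟩

theorem IsDyadic.mul_zpow {a : ℚ} (ha : IsDyadic a) (x : ℤ) : IsDyadic (a * 2 ^ x) := by
  obtain ⟨u, y, rfl⟩ := ha
  exact ⟨u, y + x, by rw [zpow_add₀ (by norm_num : (2:ℚ) ≠ 0)]; ring⟩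

/-- The additive group ℤ[1/2] of dyadic rationals. -/
def ZHalf : Type := {q : ℚ // IsDyadic q}

/-- The semidirect product ℤ[1/2] ⋊ ℤ: pairs `(r, m)` with `r ∈ ℤ[1/2]`, `m ∈ ℤ`,
and multiplication `(r, m)·(s, n) = (r + 2^m·s, m + n)`. -/
def SDP : Type := ZHalf × ℤ

instance : Group SDP where
  mul p q := (⟨p.1.1 + 2 ^ p.2 * q.1.1, p.1.2.add (IsDyadic.zpow_mul _ q.1.2)⟩, p.2 + q.2)
  one := (⟨0, isDyadic_zero⟩, 0)
  inv p := (⟨-(2 ^ (-p.2) * p.1.1), (IsDyadic.zpow_mul _ p.1.2).neg⟩, -p.2)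
  mul_assoc p q r := by
    refine Prod.ext (Subtype.ext ?_) ?_
    · show (p.1.1 + 2 ^ p.2 * q.1.1) + 2 ^ (p.2 + q.2) * r.1.1
        = p.1.1 + 2 ^ p.2 * (q.1.1 + 2 ^ q.2 * r.1.1)
      rw [zpow_add₀ (by norm_num : (2:ℚ) ≠ 0)]; ring
    · show p.2 + q.2 + r.2 = p.2 + (q.2 + r.2); ring
  one_mul p := by
    refine Prod.ext (Subtype.ext ?_) ?_
    · show (0 : ℚ) + 2 ^ (0 : ℤ) * p.1.1 = p.1.1
      norm_num
    · show 0 + p.2 = p.2; ring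
  mul_one p := by
    refine Prod.ext (Subtype.ext ?_) ?_
    · show p.1.1 + 2 ^ p.2 * 0 = p.1.1
      ring
    · show p.2 + 0 = p.2; ring
  inv_mul_cancel p := by
    refine Prod.ext (Subtype.ext ?_) ?_
    · show -(2 ^ (-p.2) * p.1.1) + 2 ^ (-p.2) * p.1.1 = (0 : ℚ)
      ring
    · show -p.2 + p.2 = 0; ring

@[simp] theorem SDP.mul_fst (p q : SDP) : (p * q).1.1 = p.1.1 + 2 ^ p.2 * q.1.1 := rfl
@[simp] theorem SDP.mul_snd (p q : SDP) : (p * q).2 = p.2 + q.2 := rfl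
@[simp] theorem SDP.one_fst : (1 : SDP).1.1 = 0 := rfl
@[simp] theorem SDP.one_snd : (1 : SDP).2 = 0 := rfl
@[simp] theorem SDP.inv_fst (p : SDP) : (p⁻¹).1.1 = -(2 ^ (-p.2) * p.1.1) := rfl
@[simp] theorem SDP.inv_snd (p : SDP) : (p⁻¹).2 = -p.2 := rfl

/-- Constructor for elements `(r, m)` of the semidirect product ℤ[1/2] ⋊ ℤ. -/
def SDP.mk (r : ZHalf) (m : ℤ) : SDP := (r, m)

/-- Formal expressions over the algebra ℤ[1/2] ⋊ ℤ with swapping: the constants `A` and `T`,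
a binary multiplication, inversion, and the (partial) swap operation. -/
inductive Term : Type
  | A : Term
  | T : Term
  | Mul : Term → Term → Term
  | Inv : Term → Term
  | Swap : Term → Term

/-- Partial evaluation of a term in ℤ[1/2] ⋊ ℤ: `A` evaluates to `(1,0)`, `T` to `(0,1)`,
`Mul` and `Inv` to the group operations, and `Swap s` to `(m, r)` whenever `s` evaluates to
`(r, m)` with `r ∈ ℤ` (and is undefined otherwise). -/
noncomputable def evalT : Term → Option SDP
  | .A => some (SDP.mk ⟨1, isDyadic_one⟩ 0)
  | .T => some (SDP.mk ⟨0, isDyadic_zero⟩ 1)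
  | .Mul s t => (evalT s).bind fun a => (evalT t).bind fun b => some (a * b)
  | .Inv s => (evalT s).bind fun a => some a⁻¹
  | .Swap s => (evalT s).bind fun a =>
      @dite (Option SDP) (∃ z : ℤ, a.1.1 = (z : ℚ)) (Classical.propDecidable _)
        (fun h => some (SDP.mk ⟨(a.2 : ℚ), isDyadic_int a.2⟩ h.choose))
        (fun _ => none)

/-- An explicit Gödel numbering of terms. -/
def encT : Term → ℕ
  | .A => Nat.pair 0 0
  | .T => Nat.pair 1 0
  | .Mul s t => Nat.pair 2 (Nat.pair (encT s) (encT t))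
  | .Inv s => Nat.pair 3 (encT s)
  | .Swap s => Nat.pair 4 (encT s)

namespace WP

abbrev N2 := ℕ × ℕ

def iv (p : N2) : ℤ := (p.1 : ℤ) - p.2

def addN (p q : N2) : N2 := (p.1 + q.1, p.2 + q.2)
def mulN (p q : N2) : N2 := (p.1 * q.1 + p.2 * q.2, p.1 * q.2 + p.2 * q.1)
def negN (p : N2) : N2 := (p.2, p.1)
def subN (p q : N2) : N2 := (p.1 + q.2, p.2 + q.1)
def pw (k : ℕ) : N2 := (2 ^ k, 0)

@[simp] theorem iv_addN (p q : N2) : iv (addN p q) = iv p + iv q := by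
  unfold iv addN; push_cast; ring
@[simp] theorem iv_mulN (p q : N2) : iv (mulN p q) = iv p * iv q := by
  unfold iv mulN; push_cast; ring
@[simp] theorem iv_negN (p : N2) : iv (negN p) = -iv p := by
  unfold iv negN; push_cast; ring
@[simp] theorem iv_subN (p q : N2) : iv (subN p q) = iv p - iv q := by
  unfold iv subN; push_cast; ring
@[simp] theorem iv_pw (k : ℕ) : iv (pw k) = 2 ^ k := by
  unfold iv pw; push_cast; ring

abbrev D2 := N2 × N2

def dy (d : D2) : ℚ := (iv d.1 : ℚ) * 2 ^ (iv d.2)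

theorem dy_isDyadic (d : D2) : IsDyadic (dy d) := ⟨iv d.1, iv d.2, rfl⟩

abbrev St := D2 × N2

def addD (a b : D2) : D2 :=
  if a.2.1 + b.2.2 ≤ b.2.1 + a.2.2 then
    (addN a.1 (mulN b.1 (pw ((b.2.1 + a.2.2) - (a.2.1 + b.2.2)))), a.2)
  else
    (addN (mulN a.1 (pw ((a.2.1 + b.2.2) - (b.2.1 + a.2.2)))) b.1, b.2)

theorem dy_addD (a b : D2) : dy (addD a b) = dy a + dy b := by
  unfold addD
  split
  case isTrue h =>
    set t := (b.2.1 + a.2.2) - (a.2.1 + b.2.2) with ht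
    have h2 : (t : ℤ) = iv b.2 - iv a.2 := by unfold iv; omega
    unfold dy
    simp only [iv_addN, iv_mulN, iv_pw]
    push_cast
    rw [(zpow_natCast (2 : ℚ) t).symm, h2, add_mul, mul_assoc,
      ← zpow_add₀ (by norm_num : (2:ℚ) ≠ 0), sub_add_cancel]
  case isFalse h =>
    set t := (a.2.1 + b.2.2) - (b.2.1 + a.2.2) with ht
    have h2 : (t : ℤ) = iv a.2 - iv b.2 := by unfold iv; omega
    unfold dy
    simp only [iv_addN, iv_mulN, iv_pw]
    push_cast
    rw [(zpow_natCast (2 : ℚ) t).symm, h2, add_mul, mul_assoc,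
      ← zpow_add₀ (by norm_num : (2:ℚ) ≠ 0), sub_add_cancel]

def mulS (a b : St) : St := (addD a.1 (b.1.1, addN b.1.2 a.2), addN a.2 b.2)
def invS (a : St) : St := ((negN a.1.1, subN a.1.2 a.2), negN a.2)
def swapS (a : St) : Option St :=
  if a.1.2.2 ≤ a.1.2.1 then
    some ((a.2, (0, 0)), mulN a.1.1 (pw (a.1.2.1 - a.1.2.2)))
  else if a.1.1.1 % 2 ^ (a.1.2.2 - a.1.2.1) = a.1.1.2 % 2 ^ (a.1.2.2 - a.1.2.1) then
    some ((a.2, (0, 0)),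
      (a.1.1.1 / 2 ^ (a.1.2.2 - a.1.2.1), a.1.1.2 / 2 ^ (a.1.2.2 - a.1.2.1)))
  else none

theorem swapS_some {a b : St} (h : swapS a = some b) :
    ∃ z : ℤ, dy a.1 = (z : ℚ) ∧ dy b.1 = (iv a.2 : ℚ) ∧ iv b.2 = z := by
  unfold swapS at h
  split at h
  case isTrue hle =>
    obtain rfl : ((a.2, (0, 0)), mulN a.1.1 (pw (a.1.2.1 - a.1.2.2))) = b :=
      Option.some_inj.mp h
    refine ⟨iv (mulN a.1.1 (pw (a.1.2.1 - a.1.2.2))), ?_, ?_, rfl⟩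
    · have h2 : iv a.1.2 = ((a.1.2.1 - a.1.2.2 : ℕ) : ℤ) := by unfold iv; omega
      unfold dy
      rw [h2, zpow_natCast]
      simp only [iv_mulN, iv_pw]
      push_cast
      ring
    · show dy (a.2, (0, 0)) = _
      unfold dy
      show (iv a.2 : ℚ) * 2 ^ (iv ((0 : ℕ), (0 : ℕ))) = _
      norm_num [iv]
  case isFalse hlt =>
    split at h
    case isTrue hmod =>
      obtain rfl : _ = b := Option.some_inj.mp h
      set k := a.1.2.2 - a.1.2.1 with hk
      refine ⟨iv (a.1.1.1 / 2 ^ k, a.1.1.2 / 2 ^ k), ?_, ?_, rfl⟩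
      · have hx : iv a.1.2 = -(k : ℤ) := by unfold iv; omega
        have key : iv a.1.1 = iv (a.1.1.1 / 2 ^ k, a.1.1.2 / 2 ^ k) * 2 ^ k := by
          have e1 : (a.1.1.1 : ℤ) = 2 ^ k * (a.1.1.1 / 2 ^ k : ℕ) + (a.1.1.1 % 2 ^ k : ℕ) := by
            exact_mod_cast congrArg (Nat.cast (R := ℤ)) (Nat.div_add_mod a.1.1.1 (2 ^ k)).symm
          have e2 : (a.1.1.2 : ℤ) = 2 ^ k * (a.1.1.2 / 2 ^ k : ℕ) + (a.1.1.1 % 2 ^ k : ℕ) := by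
            rw [hmod]
            exact_mod_cast congrArg (Nat.cast (R := ℤ)) (Nat.div_add_mod a.1.1.2 (2 ^ k)).symm
          show iv a.1.1 = ((a.1.1.1 / 2 ^ k : ℕ) - (a.1.1.2 / 2 ^ k : ℕ) : ℤ) * 2 ^ k
          unfold iv
          rw [e1, e2]
          push_cast
          ring
        unfold dy
        rw [hx, key]
        push_cast
        rw [zpow_neg, ← zpow_natCast (2 : ℚ) k]
        have : ((2 : ℚ) ^ (k : ℤ)) ≠ 0 := by positivity
        field_simp
      · show dy (a.2, (0, 0)) = _
        unfold dy
        show (iv a.2 : ℚ) * 2 ^ (iv ((0 : ℕ), (0 : ℕ))) = _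
        norm_num [iv]
    case isFalse hmod => exact absurd h (by simp)

theorem swapS_none {a : St} (h : swapS a = none) : ¬ ∃ z : ℤ, dy a.1 = (z : ℚ) := by
  unfold swapS at h
  split at h
  · exact absurd h (by simp)
  case isFalse hlt =>
    split at h
    · exact absurd h (by simp)
    case isFalse hmod =>
      rintro ⟨z, hz⟩
      set k := a.1.2.2 - a.1.2.1 with hk
      have hx : iv a.1.2 = -(k : ℤ) := by unfold iv; omega
      unfold dy at hz
      rw [hx, zpow_neg] at hz
      have h2q : (iv a.1.1 : ℚ) = (z : ℚ) * 2 ^ (k : ℤ) := by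
        have hne : ((2 : ℚ) ^ (k : ℤ)) ≠ 0 := by positivity
        calc (iv a.1.1 : ℚ) = ((iv a.1.1 : ℚ) * ((2 : ℚ) ^ (k : ℤ))⁻¹) * 2 ^ (k : ℤ) := by
              field_simp
          _ = (z : ℚ) * 2 ^ (k : ℤ) := by rw [hz]
      rw [zpow_natCast] at h2q
      have h2 : iv a.1.1 = z * 2 ^ k := by exact_mod_cast h2q
      have h3 : (a.1.1.1 : ℤ) = a.1.1.2 + z * 2 ^ k := by unfold iv at h2; linarith
      have h4 : (a.1.1.1 : ℤ) % 2 ^ k = (a.1.1.2 : ℤ) % 2 ^ k := by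
        rw [h3, Int.add_mul_emod_self_right]
      apply hmod
      have h5 : ((a.1.1.1 % 2 ^ k : ℕ) : ℤ) = ((a.1.1.2 % 2 ^ k : ℕ) : ℤ) := by
        push_cast
        exact h4
      exact_mod_cast h5


theorem lt_pair {k m : ℕ} (hk : 2 ≤ k) : m < Nat.pair k m := by
  unfold Nat.pair
  split <;> nlinarith

theorem unpair2_lt {n : ℕ} (h : 2 ≤ n.unpair.1) : n.unpair.2 < n := by
  conv_rhs => rw [← Nat.pair_unpair n]
  exact lt_pair h

def vA : St := (((1, 0), (0, 0)), (0, 0))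
def vT : St := (((0, 0), (0, 0)), (1, 0))

def F (n : ℕ) : Option St :=
  if n.unpair.1 = 0 then some vA
  else if n.unpair.1 = 1 then some vT
  else if h2 : n.unpair.1 = 2 then
    (F n.unpair.2.unpair.1).bind fun a => (F n.unpair.2.unpair.2).map fun b => mulS a b
  else if h3 : n.unpair.1 = 3 then (F n.unpair.2).map invS
  else if h4 : n.unpair.1 = 4 then (F n.unpair.2).bind swapS
  else none
termination_by n
decreasing_by
  · exact lt_of_le_of_lt (Nat.unpair_left_le _) (unpair2_lt (by omega))
  · exact lt_of_le_of_lt (Nat.unpair_right_le _) (unpair2_lt (by omega))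
  · exact unpair2_lt (by omega)
  · exact unpair2_lt (by omega)

theorem F_eq (n : ℕ) : F n =
    if n.unpair.1 = 0 then some vA
    else if n.unpair.1 = 1 then some vT
    else if n.unpair.1 = 2 then
      (F n.unpair.2.unpair.1).bind fun a => (F n.unpair.2.unpair.2).map fun b => mulS a b
    else if n.unpair.1 = 3 then (F n.unpair.2).map invS
    else if n.unpair.1 = 4 then (F n.unpair.2).bind swapS
    else none := by
  rw [F]
  simp only [dite_eq_ite]

theorem F_A : F (Nat.pair 0 0) = some vA := by
  rw [F_eq]; simp [Nat.unpair_pair]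

theorem F_T : F (Nat.pair 1 0) = some vT := by
  rw [F_eq]; simp [Nat.unpair_pair]

theorem F_Mul (i j : ℕ) : F (Nat.pair 2 (Nat.pair i j)) =
    (F i).bind fun a => (F j).map fun b => mulS a b := by
  rw [F_eq]; simp [Nat.unpair_pair]

theorem F_Inv (i : ℕ) : F (Nat.pair 3 i) = (F i).map invS := by
  rw [F_eq]; simp [Nat.unpair_pair]

theorem F_Swap (i : ℕ) : F (Nat.pair 4 i) = (F i).bind swapS := by
  rw [F_eq]; simp [Nat.unpair_pair]

def L (n : ℕ) : List ℕ :=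
  if n.unpair.1 = 2 then [n.unpair.2.unpair.1, n.unpair.2.unpair.2]
  else if n.unpair.1 = 3 then [n.unpair.2]
  else if n.unpair.1 = 4 then [n.unpair.2]
  else []

def G' (n : ℕ) (l : List (Option St)) : Option St :=
  if n.unpair.1 = 0 then some vA
  else if n.unpair.1 = 1 then some vT
  else if n.unpair.1 = 2 then
    ((l[0]?).getD none).bind fun a => ((l[1]?).getD none).map fun b => mulS a b
  else if n.unpair.1 = 3 then ((l[0]?).getD none).map invS
  else if n.unpair.1 = 4 then ((l[0]?).getD none).bind swapS
  else none

open Primrec in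
theorem hpow : Primrec₂ (fun a b : ℕ => a ^ b) := Primrec₂.unpaired'.mp Nat.Primrec.pow

open Primrec in
theorem haddN : Primrec₂ addN := by
  unfold addN
  exact Primrec.pair (nat_add.comp (fst.comp fst) (fst.comp snd))
    (nat_add.comp (snd.comp fst) (snd.comp snd))

open Primrec in
theorem hmulN : Primrec₂ mulN := by
  unfold mulN
  exact Primrec.pair
    (nat_add.comp (nat_mul.comp (fst.comp fst) (fst.comp snd))
      (nat_mul.comp (snd.comp fst) (snd.comp snd)))
    (nat_add.comp (nat_mul.comp (fst.comp fst) (snd.comp snd))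
      (nat_mul.comp (snd.comp fst) (fst.comp snd)))

open Primrec in
theorem hnegN : Primrec negN := by
  unfold negN
  exact Primrec.pair snd fst

open Primrec in
theorem hsubN : Primrec₂ subN := by
  unfold subN
  exact Primrec.pair (nat_add.comp (fst.comp fst) (snd.comp snd))
    (nat_add.comp (snd.comp fst) (fst.comp snd))

open Primrec in
theorem hpw : Primrec pw := by
  unfold pw
  exact Primrec.pair (hpow.comp (const 2) Primrec.id) (const 0)

open Primrec in
theorem haddD : Primrec₂ addD := by
  unfold addD
  exact Primrec.ite
    (nat_le.comp
      (nat_add.comp (fst.comp (snd.comp fst)) (snd.comp (snd.comp snd)))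
      (nat_add.comp (fst.comp (snd.comp snd)) (snd.comp (snd.comp fst))))
    (Primrec.pair
      (haddN.comp (fst.comp fst)
        (hmulN.comp (fst.comp snd)
          (hpw.comp (nat_sub.comp
            (nat_add.comp (fst.comp (snd.comp snd)) (snd.comp (snd.comp fst)))
            (nat_add.comp (fst.comp (snd.comp fst)) (snd.comp (snd.comp snd)))))))
      (snd.comp fst))
    (Primrec.pair
      (haddN.comp
        (hmulN.comp (fst.comp fst)
          (hpw.comp (nat_sub.comp
            (nat_add.comp (fst.comp (snd.comp fst)) (snd.comp (snd.comp snd)))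
            (nat_add.comp (fst.comp (snd.comp snd)) (snd.comp (snd.comp fst))))))
        (fst.comp snd))
      (snd.comp snd))

open Primrec in
theorem hmulS : Primrec₂ mulS := by
  unfold mulS
  exact Primrec.pair
    (haddD.comp (fst.comp fst)
      (Primrec.pair (fst.comp (fst.comp snd))
        (haddN.comp (snd.comp (fst.comp snd)) (snd.comp fst))))
    (haddN.comp (snd.comp fst) (snd.comp snd))

open Primrec in
theorem hinvS : Primrec invS := by
  unfold invS
  exact Primrec.pair
    (Primrec.pair (hnegN.comp (fst.comp fst)) (hsubN.comp (snd.comp fst) snd))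
    (hnegN.comp snd)

open Primrec in
theorem hswapS : Primrec swapS := by
  unfold swapS
  exact Primrec.ite
    (nat_le.comp (snd.comp (snd.comp fst)) (fst.comp (snd.comp fst)))
    (option_some.comp (Primrec.pair
      (Primrec.pair snd (const ((0, 0) : N2)))
      (hmulN.comp (fst.comp fst)
        (hpw.comp (nat_sub.comp (fst.comp (snd.comp fst)) (snd.comp (snd.comp fst)))))))
    (Primrec.ite
      (Primrec.eq.comp
        (nat_mod.comp (fst.comp (fst.comp fst))
          (hpow.comp (const 2)
            (nat_sub.comp (snd.comp (snd.comp fst)) (fst.comp (snd.comp fst)))))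
        (nat_mod.comp (snd.comp (fst.comp fst))
          (hpow.comp (const 2)
            (nat_sub.comp (snd.comp (snd.comp fst)) (fst.comp (snd.comp fst))))))
      (option_some.comp (Primrec.pair
        (Primrec.pair snd (const ((0, 0) : N2)))
        (Primrec.pair
          (nat_div.comp (fst.comp (fst.comp fst))
            (hpow.comp (const 2)
              (nat_sub.comp (snd.comp (snd.comp fst)) (fst.comp (snd.comp fst)))))
          (nat_div.comp (snd.comp (fst.comp fst))
            (hpow.comp (const 2)
              (nat_sub.comp (snd.comp (snd.comp fst)) (fst.comp (snd.comp fst))))))))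
      (const none))

open Primrec in
theorem hL : Primrec L := by
  unfold L
  exact Primrec.ite (Primrec.eq.comp (fst.comp Primrec.unpair) (const 2))
    (list_cons.comp (fst.comp (Primrec.unpair.comp (snd.comp Primrec.unpair)))
      (list_cons.comp (snd.comp (Primrec.unpair.comp (snd.comp Primrec.unpair)))
        (const [])))
    (Primrec.ite (Primrec.eq.comp (fst.comp Primrec.unpair) (const 3))
      (list_cons.comp (snd.comp Primrec.unpair) (const []))
      (Primrec.ite (Primrec.eq.comp (fst.comp Primrec.unpair) (const 4))
        (list_cons.comp (snd.comp Primrec.unpair) (const []))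
        (const [])))

open Primrec in
theorem hG' : Primrec₂ G' := by
  unfold G'
  exact Primrec.ite (Primrec.eq.comp (fst.comp (Primrec.unpair.comp fst)) (const 0))
    (const (some vA))
    (Primrec.ite (Primrec.eq.comp (fst.comp (Primrec.unpair.comp fst)) (const 1))
      (const (some vT))
      (Primrec.ite (Primrec.eq.comp (fst.comp (Primrec.unpair.comp fst)) (const 2))
        (option_bind (option_getD.comp (list_getElem?.comp snd (const 0)) (const none))
          (option_map ((option_getD.comp (list_getElem?.comp snd (const 1)) (const none)).comp fst)
            (hmulS.comp (snd.comp fst) snd)))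
        (Primrec.ite (Primrec.eq.comp (fst.comp (Primrec.unpair.comp fst)) (const 3))
          (option_map (option_getD.comp (list_getElem?.comp snd (const 0)) (const none))
            (hinvS.comp snd))
          (Primrec.ite (Primrec.eq.comp (fst.comp (Primrec.unpair.comp fst)) (const 4))
            (option_bind (option_getD.comp (list_getElem?.comp snd (const 0)) (const none))
              (hswapS.comp snd))
            (const none)))))

theorem hF : Primrec F := by
  refine Primrec.nat_omega_rec' F (m := fun n => n) (l := L)
    (g := fun n l => some (G' n l)) Primrec.id hL
    (Primrec.option_some.comp hG').to₂ ?_ ?_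
  · intro n b' hb'
    unfold L at hb'
    split_ifs at hb' with h2 h3 h4
    · simp only [List.mem_cons, List.not_mem_nil, or_false] at hb'
      rcases hb' with rfl | rfl
      · exact lt_of_le_of_lt (Nat.unpair_left_le _) (unpair2_lt (by omega))
      · exact lt_of_le_of_lt (Nat.unpair_right_le _) (unpair2_lt (by omega))
    · simp only [List.mem_singleton] at hb'
      subst hb'
      exact unpair2_lt (by omega)
    · simp only [List.mem_singleton] at hb'
      subst hb'
      exact unpair2_lt (by omega)
    · simp at hb'
  · intro n
    rw [F_eq n]
    unfold G' L
    by_cases h0 : n.unpair.1 = 0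
    · simp [h0]
    by_cases h1 : n.unpair.1 = 1
    · simp [h0, h1]
    by_cases h2 : n.unpair.1 = 2
    · simp [h0, h1, h2]
    by_cases h3 : n.unpair.1 = 3
    · simp [h0, h1, h2, h3]
    by_cases h4 : n.unpair.1 = 4
    · simp [h0, h1, h2, h3, h4]
    · simp [h0, h1, h2, h3, h4]

def isOne : Option St → Bool
  | none => false
  | some a => (a.1.1.1 == a.1.1.2) && (a.2.1 == a.2.2)

open Primrec in
theorem hIsOne : Primrec isOne := by
  have h : Primrec fun o : Option St =>
      Option.casesOn (motive := fun _ => Bool) o false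
        fun a => (a.1.1.1 == a.1.1.2) && (a.2.1 == a.2.2) :=
    Primrec.option_casesOn Primrec.id (const false)
      (((Primrec.dom_bool₂ (· && ·)).comp
        (Primrec.beq.comp (fst.comp (fst.comp (fst.comp snd)))
          (snd.comp (fst.comp (fst.comp snd))))
        (Primrec.beq.comp (fst.comp (snd.comp snd)) (snd.comp (snd.comp snd)))).to₂)
  exact h.of_eq fun o => by cases o <;> rfl

theorem dy_zero_iff (d : D2) : dy d = 0 ↔ iv d.1 = 0 := by
  unfold dy
  constructor
  · intro h
    rcases mul_eq_zero.mp h with h | h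
    · exact_mod_cast h
    · exact absurd h (by positivity)
  · intro h
    rw [h]
    simp

def pi (a : St) : SDP := (⟨dy a.1, dy_isDyadic a.1⟩, iv a.2)

theorem pi_mulS (a b : St) : pi (mulS a b) = pi a * pi b := by
  refine Prod.ext (Subtype.ext ?_) ?_
  · show dy (mulS a b).1 = (pi a * pi b).1.1
    rw [SDP.mul_fst]
    show dy (addD a.1 (b.1.1, addN b.1.2 a.2)) = dy a.1 + 2 ^ iv a.2 * dy b.1
    rw [dy_addD]
    congr 1
    unfold dy
    simp only [iv_addN]
    rw [zpow_add₀ (by norm_num : (2:ℚ) ≠ 0)]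
    ring
  · show iv (addN a.2 b.2) = (pi a * pi b).2
    rw [SDP.mul_snd]
    exact iv_addN a.2 b.2

theorem pi_invS (a : St) : pi (invS a) = (pi a)⁻¹ := by
  refine Prod.ext (Subtype.ext ?_) ?_
  · show dy (negN a.1.1, subN a.1.2 a.2) = ((pi a)⁻¹).1.1
    rw [SDP.inv_fst]
    show _ = -(2 ^ (-iv a.2) * dy a.1)
    unfold dy
    simp only [iv_negN, iv_subN]
    rw [zpow_sub₀ (by norm_num : (2:ℚ) ≠ 0), zpow_neg]
    push_cast
    field_simp
  · show iv (negN a.2) = ((pi a)⁻¹).2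
    rw [SDP.inv_snd]
    exact iv_negN a.2

theorem evalT_eq (s : Term) : evalT s = (F (encT s)).map pi := by
  induction s with
  | A =>
    show some (SDP.mk ⟨1, isDyadic_one⟩ 0) = (F (Nat.pair 0 0)).map pi
    rw [F_A]
    refine congrArg some (Prod.ext (Subtype.ext ?_) ?_)
    · show (1 : ℚ) = dy vA.1
      unfold vA dy iv
      norm_num
    · show (0 : ℤ) = iv vA.2
      unfold vA iv
      norm_num
  | T =>
    show some (SDP.mk ⟨0, isDyadic_zero⟩ 1) = (F (Nat.pair 1 0)).map pi
    rw [F_T]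
    refine congrArg some (Prod.ext (Subtype.ext ?_) ?_)
    · show (0 : ℚ) = dy vT.1
      unfold vT dy iv
      norm_num
    · show (1 : ℤ) = iv vT.2
      unfold vT iv
      norm_num
  | Mul s t ihs iht =>
    show ((evalT s).bind fun a => (evalT t).bind fun b => some (a * b))
      = (F (Nat.pair 2 (Nat.pair (encT s) (encT t)))).map pi
    rw [ihs, iht, F_Mul]
    rcases F (encT s) with _ | a
    · rfl
    rcases F (encT t) with _ | b
    · rfl
    show some (pi a * pi b) = some (pi (mulS a b))
    rw [pi_mulS]
  | Inv s ih =>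
    show ((evalT s).bind fun a => some a⁻¹) = (F (Nat.pair 3 (encT s))).map pi
    rw [ih, F_Inv]
    rcases F (encT s) with _ | a
    · rfl
    show some (pi a)⁻¹ = some (pi (invS a))
    rw [pi_invS]
  | Swap s ih =>
    show ((evalT s).bind fun a =>
        @dite (Option SDP) (∃ z : ℤ, a.1.1 = (z : ℚ)) (Classical.propDecidable _)
          (fun h => some (SDP.mk ⟨(a.2 : ℚ), isDyadic_int a.2⟩ h.choose))
          (fun _ => none)) = (F (Nat.pair 4 (encT s))).map pi
    rw [ih, F_Swap]
    rcases F (encT s) with _ | a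
    · rfl
    simp only [Option.map_some, Option.bind_some]
    rcases hs : swapS a with _ | b
    · have hnex : ¬∃ w : ℤ, (pi a).1.1 = (w : ℚ) := swapS_none hs
      rw [dif_neg hnex]
      rfl
    · obtain ⟨z, hz, hb1, hb2⟩ := swapS_some hs
      have hex : ∃ w : ℤ, (pi a).1.1 = (w : ℚ) := ⟨z, hz⟩
      rw [dif_pos hex]
      have hw : hex.choose = z := by
        have h2 : ((hex.choose : ℤ) : ℚ) = (z : ℚ) := by
          rw [← hex.choose_spec]; exact hz
        exact_mod_cast h2
      refine congrArg some (Prod.ext (Subtype.ext ?_) ?_)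
      · show ((iv a.2 : ℤ) : ℚ) = dy b.1
        exact hb1.symm
      · show hex.choose = iv b.2
        rw [hw, hb2]

end WP

/-- The word problem of the algebra ℤ[1/2] ⋊ ℤ with swapping is decidable:
there is a computable function `g : Term → Bool` (computable in the sense that it is realized,
through the Gödel numbering `encT`, by a computable function on ℕ) such that `g s = true` if
and only if `eval s` is defined and equals the identity `(0, 0)`. -/
theorem sdp_with_swap_word_problem_decidable :
    ∃ g : Term → Bool,
      (∃ G : ℕ → Bool, Computable G ∧ ∀ s : Term, G (encT s) = g s) ∧
      ∀ s : Term, g s = true ↔ evalT s = some 1 := by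
  refine ⟨fun s => WP.isOne (WP.F (encT s)),
    ⟨fun n => WP.isOne (WP.F n), (WP.hIsOne.comp WP.hF).to_comp, fun _ => rfl⟩, ?_⟩
  intro s
  rw [show (evalT s = some 1) ↔ ((WP.F (encT s)).map WP.pi = some 1) from by
    rw [WP.evalT_eq s]]
  show WP.isOne (WP.F (encT s)) = true ↔ (WP.F (encT s)).map WP.pi = some 1
  rcases hf : WP.F (encT s) with _ | a
  · simp [WP.isOne]
  · simp only [Option.map_some, Option.some_inj]
    constructor
    · intro hb
      simp only [WP.isOne, Bool.and_eq_true, beq_iff_eq] at hb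
      obtain ⟨hu, hm⟩ := hb
      refine Prod.ext (Subtype.ext ?_) ?_
      · show WP.dy a.1 = (1 : SDP).1.1
        rw [SDP.one_fst, WP.dy_zero_iff]
        unfold WP.iv
        omega
      · show WP.iv a.2 = (1 : SDP).2
        rw [SDP.one_snd]
        unfold WP.iv
        omega
    · intro hp
      have h1 : WP.dy a.1 = 0 := by
        have := congrArg (fun x : SDP => x.1.1) hp
        simpa [SDP.one_fst, WP.pi] using this
      have h2 : WP.iv a.2 = 0 := by
        have := congrArg (fun x : SDP => x.2) hp
        simpa [SDP.one_snd, WP.pi] using this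
      have h1' : WP.iv a.1.1 = 0 := (WP.dy_zero_iff _).mp h1
      simp only [WP.isOne, Bool.and_eq_true, beq_iff_eq]
      unfold WP.iv at h1' h2
      constructor <;> omega
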